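/- For every real τ > 2 there exist β_max ∈ (0, 1/2) and c > 0 such that μ_τ(β) ≥ μ_τ(β_max) + c·(β − β_max)² for all β ∈ [0, 1/2] (in particular β_max is the unique minimiser of μ_τ on [0, 1/2]), and moreover β_max < 1 − 1/τ. -/

import Mathlib

/-- `μ_τ(β) = β log β + (1−β) log(1−β) + τ β(1−β)`; since `Real.log 0 = 0` in Mathlib,
this automatically satisfies the convention `μ_τ(0) = 0`. -/
noncomputable def muFun (τ β : ℝ) : ℝ :=
  β * Real.log β + (1 - β) * Real.log (1 - β) + τ * β * (1 - β)

/-- The derivative of `muFun` on `(0,1)`. -/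
noncomputable def phiFun (τ β : ℝ) : ℝ :=
  Real.log β - Real.log (1 - β) + τ * (1 - 2 * β)

lemma continuous_muFun (τ : ℝ) : Continuous (muFun τ) := by
  have h1 : Continuous fun x : ℝ => x * Real.log x := Real.continuous_mul_log
  have h2 : Continuous fun x : ℝ => (1 - x) * Real.log (1 - x) :=
    h1.comp (continuous_const.sub continuous_id)
  unfold muFun
  exact (h1.add h2).add ((continuous_const.mul continuous_id).mul
    (continuous_const.sub continuous_id))

lemma hasDerivAt_inner (β : ℝ) : HasDerivAt (fun x : ℝ => 1 - x) (-1) β := by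
  simpa using (hasDerivAt_id β).const_sub 1

lemma hasDerivAt_muFun (τ β : ℝ) (h0 : 0 < β) (h1 : β < 1) :
    HasDerivAt (muFun τ) (phiFun τ β) β := by
  have h1' : (0:ℝ) < 1 - β := by linarith
  have d1 : HasDerivAt (fun x : ℝ => x * Real.log x) (Real.log β + 1) β :=
    Real.hasDerivAt_mul_log h0.ne'
  have d2 : HasDerivAt (fun x : ℝ => (1 - x) * Real.log (1 - x))
      ((Real.log (1 - β) + 1) * (-1)) β :=
    (Real.hasDerivAt_mul_log h1'.ne').comp β (hasDerivAt_inner β)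
  have d3 : HasDerivAt (fun x : ℝ => τ * x * (1 - x))
      (τ * 1 * (1 - β) + τ * β * (-1)) β :=
    ((hasDerivAt_id β).const_mul τ).mul (hasDerivAt_inner β)
  have total := (d1.add d2).add d3
  have heq : phiFun τ β
      = (Real.log β + 1) + (Real.log (1 - β) + 1) * (-1) + (τ * 1 * (1 - β) + τ * β * (-1)) := by
    unfold phiFun; ring
  rw [heq]
  exact total

lemma hasDerivAt_phiFun (τ β : ℝ) (h0 : 0 < β) (h1 : β < 1) :
    HasDerivAt (phiFun τ) (1/β + 1/(1-β) - 2*τ) β := by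
  have h1' : (0:ℝ) < 1 - β := by linarith
  have d1 : HasDerivAt Real.log β⁻¹ β := Real.hasDerivAt_log h0.ne'
  have d2 : HasDerivAt (fun x : ℝ => Real.log (1 - x)) ((1-β)⁻¹ * (-1)) β :=
    (Real.hasDerivAt_log h1'.ne').comp β (hasDerivAt_inner β)
  have d3 : HasDerivAt (fun x : ℝ => τ * (1 - 2*x)) (τ * -(2*1)) β :=
    (((hasDerivAt_id β).const_mul 2).const_sub 1).const_mul τ
  have total := (d1.sub d2).add d3
  have heq : 1/β + 1/(1-β) - 2*τ = β⁻¹ - (1-β)⁻¹ * (-1) + τ * -(2*1) := by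
    field_simp; ring
  rw [heq]
  exact total

/-- `1/x + 1/(1-x) - 2τ` is positive when `x(1-x) < 1/(2τ)`. -/
lemma phi_deriv_pos {τ β : ℝ} (hτ : 0 < τ) (h0 : 0 < β) (h1 : β < 1)
    (h : β*(1-β) < 1/(2*τ)) : 0 < 1/β + 1/(1-β) - 2*τ := by
  have h1' : (0:ℝ) < 1 - β := by linarith
  have hb : 0 < β*(1-β) := by positivity
  have hlt : 2*τ*(β*(1-β)) < 1 := by
    rw [lt_div_iff₀ (by positivity)] at h; nlinarith
  have e : 1/β + 1/(1-β) - 2*τ = (1 - 2*τ*(β*(1-β)))/(β*(1-β)) := by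
    field_simp; ring
  rw [e]
  have : 0 < 1 - 2*τ*(β*(1-β)) := by linarith
  positivity

lemma phi_deriv_neg {τ β : ℝ} (hτ : 0 < τ) (h0 : 0 < β) (h1 : β < 1)
    (h : 1/(2*τ) < β*(1-β)) : 1/β + 1/(1-β) - 2*τ < 0 := by
  have h1' : (0:ℝ) < 1 - β := by linarith
  have hb : 0 < β*(1-β) := by positivity
  have hlt : 1 < 2*τ*(β*(1-β)) := by
    rw [div_lt_iff₀ (by positivity)] at h; nlinarith
  have e : 1/β + 1/(1-β) - 2*τ = (1 - 2*τ*(β*(1-β)))/(β*(1-β)) := by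
    field_simp; ring
  rw [e]
  exact div_neg_of_neg_of_pos (by linarith) hb

lemma quadmono {x y : ℝ} (h0 : 0 ≤ x) (hxy : x < y) (hy : y ≤ 1/2) :
    x*(1-x) < y*(1-y) := by nlinarith

set_option maxHeartbeats 1000000 in
theorem muFun_quadratic_min (τ : ℝ) (hτ : 2 < τ) :
    ∃ βmax c : ℝ, 0 < βmax ∧ βmax < 1 / 2 ∧ 0 < c ∧
      (∀ β ∈ Set.Icc (0 : ℝ) (1 / 2),
        muFun τ βmax + c * (β - βmax) ^ 2 ≤ muFun τ β) ∧
      βmax < 1 - 1 / τ := by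
  have hτ0 : (0:ℝ) < τ := by linarith
  -- the inflection point β₀
  set s := Real.sqrt (1 - 2/τ) with hs
  have h2τ1 : 2/τ < 1 := by rw [div_lt_one hτ0]; linarith
  have h2τ0 : 0 < 2/τ := by positivity
  have hs2 : s^2 = 1 - 2/τ := Real.sq_sqrt (by linarith)
  have hs0 : 0 < s := Real.sqrt_pos.mpr (by linarith)
  have hs1 : s < 1 := by nlinarith
  set β₀ := (1 - s)/2 with hβ₀
  have hβ₀pos : 0 < β₀ := by rw [hβ₀]; linarith
  have hβ₀lt : β₀ < 1/2 := by rw [hβ₀]; linarith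
  have hs2' : τ * s^2 = τ - 2 := by
    rw [hs2]; field_simp
  have hβ₀eq : β₀ * (1 - β₀) = 1/(2*τ) := by
    rw [hβ₀]; field_simp; nlinarith [hs2']
  have hβ₀lt1 : β₀ < 1 := by linarith
  clear_value s
  clear hs hs2 hs0 hs1 hs2' h2τ1 h2τ0
  clear_value β₀
  -- continuity of φ on sets within (0,1)
  have hφcont : ∀ {u v : ℝ}, 0 < u → v < 1 →
      ContinuousOn (phiFun τ) (Set.Icc u v) := by
    intro u v hu hv
    intro x hx
    exact ((hasDerivAt_phiFun τ x (lt_of_lt_of_le hu hx.1)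
      (lt_of_le_of_lt hx.2 hv)).continuousAt).continuousWithinAt
  have hφhalf : phiFun τ (1/2) = 0 := by
    unfold phiFun; norm_num
  -- φ is strictly decreasing on [β₀, 1/2]
  have hφanti : StrictAntiOn (phiFun τ) (Set.Icc β₀ (1/2)) := by
    apply strictAntiOn_of_deriv_neg (convex_Icc _ _) (hφcont hβ₀pos (by norm_num))
    intro x hx
    rw [interior_Icc] at hx
    have hx0 : 0 < x := lt_trans hβ₀pos hx.1
    have hx1 : x < 1 := by linarith [hx.2]
    rw [(hasDerivAt_phiFun τ x hx0 hx1).deriv]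
    have hq : 1/(2*τ) < x*(1-x) := by
      rw [← hβ₀eq]; exact quadmono hβ₀pos.le hx.1 hx.2.le
    exact phi_deriv_neg hτ0 hx0 hx1 hq
  have hφβ₀pos : 0 < phiFun τ β₀ := by
    have := hφanti (Set.mem_Icc.mpr ⟨le_refl _, hβ₀lt.le⟩)
      (Set.mem_Icc.mpr ⟨hβ₀lt.le, le_refl _⟩) hβ₀lt
    rw [hφhalf] at this; exact this
  -- a small point where φ is negative
  set a := min (β₀/2) (Real.exp (-τ - 1)) with ha
  have ha0 : 0 < a := lt_min (by linarith) (Real.exp_pos _)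
  have haβ₀ : a < β₀ := lt_of_le_of_lt (min_le_left _ _) (by linarith)
  have ha4 : a < 1/4 := lt_of_le_of_lt (min_le_left _ _) (by linarith)
  have hφaneg : phiFun τ a < 0 := by
    have hlog : Real.log a ≤ -τ - 1 := by
      calc Real.log a ≤ Real.log (Real.exp (-τ - 1)) :=
            Real.log_le_log ha0 (min_le_right _ _)
        _ = -τ - 1 := Real.log_exp _
    have hl2 : -Real.log (1 - a) ≤ Real.log 2 := by
      have h1a : (0:ℝ) < 1 - a := by linarith
      rw [← Real.log_inv]
      apply Real.log_le_log (by positivity)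
      rw [inv_le_comm₀ (by linarith) (by norm_num)]
      linarith
    have hlog2 : Real.log 2 < 1 := by
      have := Real.log_two_lt_d9; linarith
    unfold phiFun
    nlinarith [hτ0, ha0]
  clear_value a
  -- IVT: the critical point βmax
  obtain ⟨βmax, hβmem, hβval⟩ :
      ∃ x ∈ Set.Icc a β₀, phiFun τ x = 0 := by
    have h := intermediate_value_Icc haβ₀.le (hφcont ha0 hβ₀lt1)
    have : (0:ℝ) ∈ Set.Icc (phiFun τ a) (phiFun τ β₀) :=
      Set.mem_Icc.mpr ⟨hφaneg.le, hφβ₀pos.le⟩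
    obtain ⟨x, hx, hx0⟩ := h this
    exact ⟨x, hx, hx0⟩
  have hβmax0 : 0 < βmax := lt_of_lt_of_le ha0 hβmem.1
  have hβmaxβ₀ : βmax < β₀ := by
    rcases lt_or_eq_of_le hβmem.2 with h | h
    · exact h
    · exfalso; rw [h] at hβval; rw [hβval] at hφβ₀pos; exact lt_irrefl 0 hφβ₀pos
  have hβmaxhalf : βmax < 1/2 := lt_trans hβmaxβ₀ hβ₀lt
  have hβmax1 : βmax < 1 := by linarith
  -- β₁ and the strong-convexity constant m
  set β₁ := (βmax + β₀)/2 with hβ₁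
  have hβ₁l : βmax < β₁ := by rw [hβ₁]; linarith
  have hβ₁r : β₁ < β₀ := by rw [hβ₁]; linarith
  have hβ₁0 : 0 < β₁ := by linarith
  have hβ₁half : β₁ < 1/2 := by linarith
  have hβ₁1 : β₁ < 1 := by linarith
  clear_value β₁
  set m := 1/β₁ + 1/(1-β₁) - 2*τ with hm
  have hmpos : 0 < m := by
    have hq : β₁*(1-β₁) < 1/(2*τ) := by
      rw [← hβ₀eq]; exact quadmono hβ₁0.le hβ₁r hβ₀lt.le
    exact phi_deriv_pos hτ0 hβ₁0 hβ₁1 hq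
  clear_value m
  -- ψ := φ - m (· - βmax) is monotone on (0, β₁]
  set ψ := fun x : ℝ => phiFun τ x - m * (x - βmax) with hψ
  have hψdef : ∀ x, ψ x = phiFun τ x - m * (x - βmax) := fun _ => rfl
  clear_value ψ
  have hψβmax : ψ βmax = 0 := by rw [hψdef, hβval]; ring
  have hψderiv : ∀ x, 0 < x → x < 1 →
      HasDerivAt ψ (1/x + 1/(1-x) - 2*τ - m) x := by
    intro x hx0 hx1
    have h' := (hasDerivAt_phiFun τ x hx0 hx1).sub
      (((hasDerivAt_id x).sub_const βmax).const_mul m)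
    rw [hψ]
    exact h'.congr_deriv (by ring)
  have hψmono : MonotoneOn ψ (Set.Ioc 0 β₁) := by
    apply monotoneOn_of_deriv_nonneg (convex_Ioc _ _)
    · intro x hx
      exact ((hψderiv x hx.1 (by linarith [hx.2])).continuousAt).continuousWithinAt
    · intro x hx
      rw [interior_Ioc] at hx
      exact ((hψderiv x hx.1 (by linarith [hx.2])).differentiableAt).differentiableWithinAt
    · intro x hx
      rw [interior_Ioc] at hx
      have hx1 : x < 1 := by linarith [hx.2]
      rw [(hψderiv x hx.1 hx1).deriv]
      have hx0' : x ≠ 0 := ne_of_gt hx.1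
      have hx1' : (1:ℝ) - x ≠ 0 := ne_of_gt (by linarith)
      have hβ₁0' : β₁ ≠ 0 := ne_of_gt hβ₁0
      have hβ₁1' : (1:ℝ) - β₁ ≠ 0 := ne_of_gt (by linarith)
      have e1 : 1/x + 1/(1-x) = 1/(x*(1-x)) := by
        field_simp
        ring
      have e2 : 1/β₁ + 1/(1-β₁) = 1/(β₁*(1-β₁)) := by
        field_simp
        ring
      have hmm : m ≤ 1/x + 1/(1-x) - 2*τ := by
        rw [hm, e1, e2]
        have hle : x*(1-x) ≤ β₁*(1-β₁) := (quadmono hx.1.le hx.2 hβ₁half.le).le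
        have := one_div_le_one_div_of_le
          (mul_pos hx.1 (by linarith : (0:ℝ) < 1 - x)) hle
        linarith
      linarith
  -- g := μ - (m/2)(· - βmax)² has deriv ψ
  set g := fun x : ℝ => muFun τ x - m/2 * (x - βmax)^2 with hg
  have hgdef : ∀ x, g x = muFun τ x - m/2 * (x - βmax)^2 := fun _ => rfl
  clear_value g
  have hgderiv : ∀ x, 0 < x → x < 1 → HasDerivAt g (ψ x) x := by
    intro x hx0 hx1
    have d2 : HasDerivAt (fun y : ℝ => m/2 * (y - βmax)^2)
        (m/2 * (2 * (x - βmax)^1 * 1)) x :=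
      (((hasDerivAt_id x).sub_const βmax).pow 2).const_mul (m/2)
    have := (hasDerivAt_muFun τ x hx0 hx1).sub d2
    have heq : ψ x = phiFun τ x - m/2 * (2 * (x - βmax)^1 * 1) := by
      rw [hψdef]; ring
    rw [heq, hg]
    exact this
  have hgcont : Continuous g := by
    rw [hg]
    exact (continuous_muFun τ).sub
      (continuous_const.mul ((continuous_id.sub continuous_const).pow 2))
  -- g is antitone on [0, βmax]
  have hganti : AntitoneOn g (Set.Icc 0 βmax) := by
    apply antitoneOn_of_deriv_nonpos (convex_Icc _ _) hgcont.continuousOn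
    · intro x hx
      rw [interior_Icc] at hx
      exact ((hgderiv x hx.1 (by linarith [hx.2])).differentiableAt).differentiableWithinAt
    · intro x hx
      rw [interior_Icc] at hx
      rw [(hgderiv x hx.1 (by linarith [hx.2])).deriv]
      have := hψmono (Set.mem_Ioc.mpr ⟨hx.1, by linarith [hx.2]⟩)
        (Set.mem_Ioc.mpr ⟨hβmax0, hβ₁l.le⟩) hx.2.le
      rw [hψβmax] at this; exact this
  -- g is monotone on [βmax, β₁]
  have hgmono : MonotoneOn g (Set.Icc βmax β₁) := by
    apply monotoneOn_of_deriv_nonneg (convex_Icc _ _) hgcont.continuousOn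
    · intro x hx
      rw [interior_Icc] at hx
      exact ((hgderiv x (by linarith [hx.1]) (by linarith [hx.2])).differentiableAt).differentiableWithinAt
    · intro x hx
      rw [interior_Icc] at hx
      rw [(hgderiv x (by linarith [hx.1]) (by linarith [hx.2])).deriv]
      have := hψmono (Set.mem_Ioc.mpr ⟨hβmax0, hβ₁l.le⟩)
        (Set.mem_Ioc.mpr ⟨by linarith [hx.1], hx.2.le⟩) hx.1.le
      rw [hψβmax] at this; exact this
  have hgβmax : g βmax = muFun τ βmax := by rw [hgdef]; ring
  -- strong convexity bound on [0, β₁]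
  have hkey1 : ∀ β ∈ Set.Icc (0:ℝ) β₁,
      muFun τ βmax + m/2 * (β - βmax)^2 ≤ muFun τ β := by
    intro β hβ
    rcases le_or_gt β βmax with h | h
    · have := hganti (Set.mem_Icc.mpr ⟨hβ.1, h⟩)
        (Set.mem_Icc.mpr ⟨hβmax0.le, le_refl _⟩) h
      rw [hgβmax, hgdef] at this
      linarith
    · have := hgmono (Set.mem_Icc.mpr ⟨le_refl _, hβ₁l.le⟩)
        (Set.mem_Icc.mpr ⟨h.le, hβ.2⟩) h.le
      rw [hgβmax, hgdef] at this
      linarith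
  -- φ ≥ 0 on [βmax, 1/2], hence μ is monotone there
  have hφmono : MonotoneOn (phiFun τ) (Set.Icc βmax β₀) := by
    apply monotoneOn_of_deriv_nonneg (convex_Icc _ _) (hφcont hβmax0 hβ₀lt1)
    · intro x hx
      rw [interior_Icc] at hx
      exact ((hasDerivAt_phiFun τ x (by linarith [hx.1])
        (by linarith [hx.2])).differentiableAt).differentiableWithinAt
    · intro x hx
      rw [interior_Icc] at hx
      have hx0 : 0 < x := by linarith [hx.1]
      have hx1 : x < 1 := by linarith [hx.2]
      rw [(hasDerivAt_phiFun τ x hx0 hx1).deriv]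
      have hq : x*(1-x) < 1/(2*τ) := by
        rw [← hβ₀eq]; exact quadmono hx0.le hx.2 hβ₀lt.le
      exact (phi_deriv_pos hτ0 hx0 hx1 hq).le
  have hφnonneg : ∀ x ∈ Set.Ioo βmax (1/2:ℝ), 0 ≤ phiFun τ x := by
    intro x hx
    rcases le_or_gt x β₀ with h | h
    · have := hφmono (Set.mem_Icc.mpr ⟨le_refl _, hβmaxβ₀.le⟩)
        (Set.mem_Icc.mpr ⟨hx.1.le, h⟩) hx.1.le
      rw [hβval] at this; exact this
    · have := hφanti.antitoneOn (Set.mem_Icc.mpr ⟨h.le, hx.2.le⟩)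
        (Set.mem_Icc.mpr ⟨hβ₀lt.le, le_refl _⟩) hx.2.le
      rw [hφhalf] at this; exact this
  have hμmono : MonotoneOn (muFun τ) (Set.Icc βmax (1/2:ℝ)) := by
    apply monotoneOn_of_deriv_nonneg (convex_Icc _ _) (continuous_muFun τ).continuousOn
    · intro x hx
      rw [interior_Icc] at hx
      exact ((hasDerivAt_muFun τ x (by linarith [hx.1])
        (by linarith [hx.2])).differentiableAt).differentiableWithinAt
    · intro x hx
      rw [interior_Icc] at hx
      rw [(hasDerivAt_muFun τ x (by linarith [hx.1]) (by linarith [hx.2])).deriv]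
      exact hφnonneg x hx
  -- assemble
  refine ⟨βmax, m/2 * (β₁ - βmax)^2, hβmax0, hβmaxhalf,
    mul_pos (half_pos hmpos) (pow_pos (by linarith) 2), ?_, ?_⟩
  · intro β hβ
    have hsq1 : (β₁ - βmax)^2 ≤ 1 := by nlinarith
    rcases le_or_gt β β₁ with h | h
    · have h1 := hkey1 β ⟨hβ.1, h⟩
      have h2 : m/2 * (β₁ - βmax)^2 * (β - βmax)^2 ≤ m/2 * (β - βmax)^2 := by
        have hbb := mul_le_mul_of_nonneg_right hsq1 (sq_nonneg (β - βmax))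
        nlinarith [hbb, half_pos hmpos]
      linarith
    · have h1 := hkey1 β₁ ⟨hβ₁0.le, le_refl _⟩
      have h2 := hμmono (Set.mem_Icc.mpr ⟨hβ₁l.le, hβ₁half.le⟩)
        (Set.mem_Icc.mpr ⟨by linarith, hβ.2⟩) h.le
      have hsq2 : (β - βmax)^2 ≤ 1 := by
        nlinarith [hβ.1, hβ.2]
      have h3 : m/2 * (β₁ - βmax)^2 * (β - βmax)^2 ≤ m/2 * (β₁ - βmax)^2 := by
        have hbb := mul_le_mul_of_nonneg_left hsq2 (sq_nonneg (β₁ - βmax))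
        nlinarith [hbb, half_pos hmpos]
      linarith
  · have h2 : 1/τ < 1/2 := by
      rw [div_lt_div_iff₀ hτ0 (by norm_num : (0:ℝ) < 2)]; linarith
    linarith
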